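/- In the interlaced ortree on indices 1..2^(n+1)-1 (leaves odd, internal nodes even), the depth of the tree is n, and updating the stored OR values along the path from a changed leaf to the root—i.e., the sequence of operations p := p AND -4; fill[p+2] := fill[p+1] OR fill[p+3]; p := p AND -8; fill[p+4] := fill[p+2] OR fill[p+6]; ...; p := p AND -2^(k+1); fill[p + 2^k] := fill[p + 2^(k-1)] OR fill[p + 3·2^(k-1)] for k = 1..n—restores the invariant that every internal node stores the OR of its children, touching exactly n internal nodes, namely all ancestors of the changed leaf. -/

import Mathlib

/-- The internal index updated at step `k`: clear the low `k+1` bits of `p`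
(`p &&& -2^(k+1)`) and add `2^k`. -/
def updIdx (p k : ℕ) : ℕ := p - p % 2 ^ (k + 1) + 2 ^ k

/-- One update step of `ortree_update`: store at `updIdx p k` the OR of its two
children `updIdx p k - 2^(k-1)` and `updIdx p k + 2^(k-1)`. -/
def updStep (g : ℕ → ℕ) (p k : ℕ) : ℕ → ℕ :=
  Function.update g (updIdx p k)
    (g (updIdx p k - 2 ^ (k - 1)) ||| g (updIdx p k + 2 ^ (k - 1)))

/-- Running the update steps for levels `1, 2, ..., k`. -/
def runUpd (g : ℕ → ℕ) (p : ℕ) : ℕ → (ℕ → ℕ)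
  | 0 => g
  | k + 1 => updStep (runUpd g p k) p (k + 1)

lemma updIdx_eq (p k : ℕ) : updIdx p k = p / 2^(k+1) * 2^(k+1) + 2^k := by
  have := Nat.div_add_mod' p (2^(k+1)); unfold updIdx; omega

lemma node_mod {m q s : ℕ} (h : m = q*2^(s+1)+2^s) : m % 2^(s+1) = 2^s := by
  subst h; rw [mul_comm, Nat.mul_add_mod]
  exact Nat.mod_eq_of_lt (Nat.pow_lt_pow_succ (by norm_num))

lemma val_ne {s t q q' : ℕ} (hst : s < t) : q*2^(s+1)+2^s ≠ q'*2^(t+1)+2^t := by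
  intro h
  have h1 : (q*2^(s+1)+2^s) % 2^(s+1) = 2^s := node_mod rfl
  have hd : 2^(s+1) ∣ q'*2^(t+1)+2^t := by
    have h2 : (2:ℕ)^(s+1) ∣ 2^t := pow_dvd_pow 2 hst
    exact Dvd.dvd.add ((h2.trans (pow_dvd_pow 2 t.le_succ)).mul_left q') h2
  have h0 : (q'*2^(t+1)+2^t) % 2^(s+1) = 0 := Nat.mod_eq_zero_of_dvd hd
  rw [h] at h1
  have := Nat.two_pow_pos s
  omega

lemma node_s_unique {s t q q' : ℕ} (h : q*2^(s+1)+2^s = q'*2^(t+1)+2^t) : s = t := by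
  rcases lt_trichotomy s t with hlt | he | hlt
  · exact absurd h (val_ne hlt)
  · exact he
  · exact absurd h.symm (val_ne hlt)

lemma updIdx_left {p : ℕ} (hp : Odd p) (k : ℕ) : updIdx p k - 2^k < p := by
  rw [updIdx_eq]
  have h1 := Nat.div_add_mod' p (2^(k+1))
  have h2 : p % 2^(k+1) ≠ 0 := by
    intro h
    have h4 : (2:ℕ) ∣ p := (dvd_pow_self 2 (Nat.succ_ne_zero k)).trans (Nat.dvd_of_mod_eq_zero h)
    have h5 := Nat.odd_iff.mp hp
    obtain ⟨c, hc⟩ := h4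
    omega
  omega

lemma updIdx_right (p k : ℕ) : p < updIdx p k + 2^k := by
  rw [updIdx_eq]
  have h1 := Nat.div_add_mod' p (2^(k+1))
  have h2 : p % 2^(k+1) < 2^(k+1) := Nat.mod_lt _ (by positivity)
  have h3 : (2:ℕ)^(k+1) = 2^k + 2^k := by rw [pow_succ]; ring
  omega

lemma updIdx_unique {p m s : ℕ} (hform : ∃ q, m = q*2^(s+1)+2^s)
    (hl : m - 2^s < p) (hr : p < m + 2^s) : m = updIdx p s := by
  obtain ⟨q, rfl⟩ := hform
  have h3 : (2:ℕ)^(s+1) = 2^s + 2^s := by rw [pow_succ]; ring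
  have hq : p / 2^(s+1) = q := by
    have he : (q+1)*2^(s+1) = q*2^(s+1)+2^(s+1) := by ring
    apply Nat.div_eq_of_lt_le <;> omega
  rw [updIdx_eq, hq]


lemma updIdx_form (p k : ℕ) : ∃ q, updIdx p k = q * 2^(k+1) + 2^k :=
  ⟨p / 2^(k+1), updIdx_eq p k⟩

/-- In the interlaced ortree on indices `1, …, 2^(n+1) - 1` (odd leaves, even
internal nodes, depth `n`), after changing the data of the odd leaf `p` the
update sequence of `ortree_update` along levels `1, …, n` restores the
invariant that every internal node stores the OR of its two children; the `n`
updated internal indices `updIdx p 1, …, updIdx p n` are precisely the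
ancestors of the leaf `p`. -/
theorem ortree_update_correct (n : ℕ) (hn : 1 ≤ n)
    (p : ℕ) (hp : Odd p) (hpn : p < 2 ^ (n + 1))
    (fill : ℕ → ℕ)
    (hinv : ∀ m s, 1 ≤ s → s ≤ n → m < 2 ^ (n + 1) →
      (∃ q, m = q * 2 ^ (s + 1) + 2 ^ s) → m ≠ updIdx p s →
      fill m = fill (m - 2 ^ (s - 1)) ||| fill (m + 2 ^ (s - 1))) :
    (∀ m s, 1 ≤ s → s ≤ n → m < 2 ^ (n + 1) →
      (∃ q, m = q * 2 ^ (s + 1) + 2 ^ s) →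
      runUpd fill p n m =
        runUpd fill p n (m - 2 ^ (s - 1)) ||| runUpd fill p n (m + 2 ^ (s - 1))) ∧
    (∀ k, 1 ≤ k → k ≤ n →
      (∃ q, updIdx p k = q * 2 ^ (k + 1) + 2 ^ k) ∧
      updIdx p k - 2 ^ k < p ∧ p < updIdx p k + 2 ^ k) ∧
    (∀ m s, 1 ≤ s → s ≤ n → (∃ q, m = q * 2 ^ (s + 1) + 2 ^ s) →
      m - 2 ^ s < p → p < m + 2 ^ s → m = updIdx p s) := by
  refine ⟨?_, fun k _ _ => ⟨updIdx_form p k, updIdx_left hp k, updIdx_right p k⟩,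
    fun m s _ _ hform hl hr => updIdx_unique hform hl hr⟩
  have main : ∀ k, ∀ m s, 1 ≤ s → s ≤ n → m < 2^(n+1) →
      (∃ q, m = q * 2^(s+1) + 2^s) → (s ≤ k ∨ m ≠ updIdx p s) →
      runUpd fill p k m =
        runUpd fill p k (m - 2^(s-1)) ||| runUpd fill p k (m + 2^(s-1)) := by
    intro k
    induction k with
    | zero =>
      intro m s h1 h2 h3 hform hc
      exact hinv m s h1 h2 h3 hform (hc.resolve_left (by omega))
    | succ k IH =>
      intro m s h1 h2 h3 hform hc
      set G := runUpd fill p k with hG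
      set M := updIdx p (k+1) with hM
      have hstep : runUpd fill p (k+1) =
          Function.update G M (G (M - 2^k) ||| G (M + 2^k)) := by
        show updStep G p (k+1) = _
        unfold updStep
        norm_num
        rfl
      rw [hstep]
      obtain ⟨Q, hQ⟩ := updIdx_form p (k+1)
      rw [← hM] at hQ
      have hM2 : (2:ℕ)^(k+1) ≤ M := by
        rw [hQ]; have := Nat.le_add_left (2^(k+2)) (Q * 2^(k+2)); omega
      by_cases hm : m = M
      · -- updated node itself
        obtain ⟨q, hq⟩ := hform
        have hs : s = k + 1 := node_s_unique
          (show q*2^(s+1)+2^s = Q*2^(k+1+1)+2^(k+1) by rw [← hq, hm, hQ])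
        subst hs hm
        have hk1 : (0:ℕ) < 2^k := by positivity
        have hkk : (2:ℕ)^(k+1) = 2^k + 2^k := by rw [pow_succ]; ring
        have hne1 : M - 2^k ≠ M := by omega
        have hne2 : M + 2^k ≠ M := by omega
        rw [show k + 1 - 1 = k from rfl]
        rw [Function.update_self, Function.update_of_ne hne1, Function.update_of_ne hne2]
      · -- untouched node
        obtain ⟨q, hq⟩ := hform
        have hkk : ∀ j, (2:ℕ)^(j+1) = 2^j + 2^j := fun j => by rw [pow_succ]; ring
        have hs1 : (2:ℕ)^(s-1) ≤ 2^s := Nat.pow_le_pow_right (by norm_num) (by omega)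
        have hss : s - 1 + 1 = s := by omega
        have hmpos : (2:ℕ)^s ≤ m := by rw [hq]; have := Nat.le_add_left (2^s) (q * 2^(s+1)); omega
        -- children forms
        have hlform : m - 2^(s-1) = (2*q) * 2^((s-1)+1) + 2^(s-1) := by
          rw [hq]
          have h2s : (2:ℕ)^s = 2^(s-1) + 2^(s-1) := by rw [← hkk (s-1), hss]
          have : 2*q*2^((s-1)+1) = q * 2^(s+1) := by
            rw [hss]; rw [hkk s]; ring
          omega
        have hrform : m + 2^(s-1) = (2*q+1) * 2^((s-1)+1) + 2^(s-1) := by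
          rw [hq]
          have h2s : (2:ℕ)^s = 2^(s-1) + 2^(s-1) := by rw [← hkk (s-1), hss]
          have : (2*q+1)*2^((s-1)+1) = q * 2^(s+1) + 2^s := by
            rw [hss]; rw [hkk s]; ring
          omega
        have hchl : m - 2^(s-1) ≠ M := by
          intro hcM
          have hs2 : s - 1 = k + 1 := node_s_unique
            (show (2*q)*2^((s-1)+1)+2^(s-1) = Q*2^(k+1+1)+2^(k+1) by rw [← hlform, hcM, hQ])
          have hs3 : s = k + 2 := by omega
          subst hs3
          have hcM' : m - 2^(k+1) = M := hcM
          have hkk2 : (2:ℕ)^(k+2) = 2^(k+1) + 2^(k+1) := by rw [pow_succ 2 (k+1)]; ring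
          have hML : updIdx p (k+1) - 2^(k+1) < p := updIdx_left hp (k+1)
          have hMR : p < updIdx p (k+1) + 2^(k+1) := updIdx_right p (k+1)
          have : m = updIdx p (k+2) := by
            apply updIdx_unique ⟨q, hq⟩ <;> omega
          exact (hc.resolve_left (by omega)) this
        have hchr : m + 2^(s-1) ≠ M := by
          intro hcM
          have hs2 : s - 1 = k + 1 := node_s_unique
            (show (2*q+1)*2^((s-1)+1)+2^(s-1) = Q*2^(k+1+1)+2^(k+1) by rw [← hrform, hcM, hQ])
          have hs3 : s = k + 2 := by omega
          subst hs3
          have hcM' : m + 2^(k+1) = M := hcM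
          have hkk2 : (2:ℕ)^(k+2) = 2^(k+1) + 2^(k+1) := by rw [pow_succ 2 (k+1)]; ring
          have hML : updIdx p (k+1) - 2^(k+1) < p := updIdx_left hp (k+1)
          have hMR : p < updIdx p (k+1) + 2^(k+1) := updIdx_right p (k+1)
          have : m = updIdx p (k+2) := by
            apply updIdx_unique ⟨q, hq⟩ <;> omega
          exact (hc.resolve_left (by omega)) this
        rw [Function.update_of_ne hm, Function.update_of_ne hchl, Function.update_of_ne hchr]
        apply IH m s h1 h2 h3 ⟨q, hq⟩
        rcases hc with hc | hc
        · by_cases hsk : s ≤ k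
          · exact Or.inl hsk
          · have : s = k + 1 := by omega
            exact Or.inr (this ▸ hm)
        · exact Or.inr hc
  intro m s h1 h2 h3 hform
  exact main n m s h1 h2 h3 hform (Or.inl h2)
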